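/- Contiguous Saalschütz formula. Let n and p be nonnegative integers, let a, b, c be complex numbers, and set σ = c − a − b − 1. Assume (c)_s ≠ 0 and (p − n − σ)_s ≠ 0 for 1 ≤ s ≤ n, (c − a − p)_k ≠ 0 and (c − b − p)_k ≠ 0 for 1 ≤ k ≤ min(p, n), and (c − a − b − p)_n ≠ 0. Then Σ_{s=0}^{n} (−n)_s (a)_s (b)_s / ( (c)_s (p − n − σ)_s s! ) = ( (c−a−p)_n (c−b−p)_n / ( (c)_n (c−a−b−p)_n ) ) · Σ_{k=0}^{min(p,n)} (−p)_k (−n)_k (c−a−b−p)_k / ( (c−a−p)_k (c−b−p)_k k! ). -/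

import Mathlib

/-- Pochhammer symbol `(a)ₖ = a(a+1)⋯(a+k−1)` for complex `a`. -/
noncomputable def poch (a : ℂ) (k : ℕ) : ℂ := ∏ i ∈ Finset.range k, (a + i)

open Finset

lemma poch_zero (a : ℂ) : poch a 0 = 1 := by simp [poch]

lemma poch_succ (a : ℂ) (k : ℕ) : poch a (k+1) = poch a k * (a + k) := by
  simp [poch, prod_range_succ]

lemma poch_add (a : ℂ) (j t : ℕ) : poch a (j + t) = poch a j * poch (a + j) t := by
  simp only [poch, prod_range_add]
  congr 1
  refine prod_congr rfl fun i _ => ?_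
  push_cast; ring

lemma poch_reflect (x : ℂ) (m : ℕ) : poch x m = (-1)^m * poch (1 - x - m) m := by
  have h : poch (1 - x - m) m = ∏ i ∈ range m, (1 - x - m + (m - 1 - i : ℕ)) := by
    rw [poch, ← prod_range_reflect]
  rw [h]
  rw [show ((-1:ℂ))^m = ∏ _i ∈ range m, (-1:ℂ) by simp, ← prod_mul_distrib, poch]
  refine prod_congr rfl fun i hi => ?_
  rw [mem_range] at hi
  have h1 : (1:ℕ) ≤ m := by omega
  have h2 : i ≤ m - 1 := by omega
  rw [Nat.cast_sub h2, Nat.cast_sub h1]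
  push_cast
  ring

lemma poch_neg_nat (P : ℕ) : ∀ t : ℕ, poch (-(P:ℂ)) t = (-1)^t * (P.descFactorial t : ℂ)
  | 0 => by simp [poch_zero]
  | (t+1) => by
    rw [poch_succ, poch_neg_nat P t, Nat.descFactorial_succ]
    rcases le_or_gt (t+1) P with h | h
    · have : ((P - t : ℕ) : ℂ) = (P : ℂ) - t := by
        rw [Nat.cast_sub (by omega)]
      push_cast [this]
      ring
    · have h1 : P.descFactorial t * (P - t) = 0 := by
        rcases Nat.lt_or_ge P t with h2 | h2
        · simp [Nat.descFactorial_eq_zero_iff_lt.2 h2]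
        · have : P - t = 0 := by omega
          simp [this]
      have hPt : P - t = 0 := by omega
      rw [hPt]
      rcases eq_or_lt_of_le (by omega : P ≤ t) with hEq | hLt
      · subst hEq
        push_cast
        ring
      · rw [Nat.descFactorial_eq_zero_iff_lt.2 hLt]
        push_cast
        ring

lemma poch_conv : ∀ (m : ℕ) (X Y : ℂ),
    ∑ t ∈ range (m+1), (m.choose t : ℂ) * poch X t * poch Y (m - t) = poch (X + Y) m := by
  intro m
  induction m with
  | zero => intro X Y; simp [poch_zero]
  | succ m ih =>
    intro X Y
    have key : ∑ t ∈ range (m+2), ((m+1).choose t : ℂ) * poch X t * poch Y (m+1-t)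
        = ∑ t ∈ range (m+1), (m.choose t : ℂ) * poch X t * poch Y (m+1-t)
          + ∑ t ∈ range (m+1), (m.choose t : ℂ) * poch X (t+1) * poch Y (m-t) := by
      rw [Finset.sum_range_succ' (fun t => ((m+1).choose t : ℂ) * poch X t * poch Y (m+1-t))]
      have e1 : ∀ t ∈ range (m+1), ((m+1).choose (t+1) : ℂ) * poch X (t+1) * poch Y (m+1-(t+1))
          = (m.choose (t+1) : ℂ) * poch X (t+1) * poch Y (m-t) + (m.choose t : ℂ) * poch X (t+1) * poch Y (m-t) := by
        intro t _
        have hs : m + 1 - (t+1) = m - t := by omega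
        rw [Nat.choose_succ_succ, hs]
        push_cast
        ring
      rw [Finset.sum_congr rfl e1, Finset.sum_add_distrib]
      have e2 : ∑ t ∈ range (m+1), (m.choose (t+1) : ℂ) * poch X (t+1) * poch Y (m-t)
          = ∑ t ∈ range (m+2), (m.choose t : ℂ) * poch X t * poch Y (m+1-t)
            - (m.choose 0 : ℂ) * poch X 0 * poch Y (m+1) := by
        rw [Finset.sum_range_succ' (fun t => (m.choose t : ℂ) * poch X t * poch Y (m+1-t))]
        have : ∀ t ∈ range (m+1), (m.choose (t+1) : ℂ) * poch X (t+1) * poch Y (m+1-(t+1))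
            = (m.choose (t+1) : ℂ) * poch X (t+1) * poch Y (m-t) := by
          intro t _
          congr 2
          omega
        rw [Finset.sum_congr rfl this]
        simp
      rw [e2]
      have e3 : ∑ t ∈ range (m+2), (m.choose t : ℂ) * poch X t * poch Y (m+1-t)
          = ∑ t ∈ range (m+1), (m.choose t : ℂ) * poch X t * poch Y (m+1-t) := by
        rw [Finset.sum_range_succ]
        simp [Nat.choose_succ_self]
      rw [e3]
      simp [poch_zero]
      try ring
    rw [key]
    have e4 : ∀ t ∈ range (m+1),
        (m.choose t : ℂ) * poch X t * poch Y (m+1-t) + (m.choose t : ℂ) * poch X (t+1) * poch Y (m-t)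
        = ((m.choose t : ℂ) * poch X t * poch Y (m-t)) * (X + Y + m) := by
      intro t ht
      rw [mem_range] at ht
      have h1 : m + 1 - t = (m - t) + 1 := by omega
      rw [h1, poch_succ, poch_succ]
      have h2 : ((m - t : ℕ) : ℂ) = (m : ℂ) - t := by rw [Nat.cast_sub (by omega)]
      rw [h2]
      ring
    rw [← Finset.sum_add_distrib, Finset.sum_congr rfl e4, ← Finset.sum_mul, ih X Y]
    rw [poch_succ]

lemma poch_split_of_le (a : ℂ) {s n : ℕ} (h : s ≤ n) :
    poch a n = poch a s * poch (a + s) (n - s) := by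
  conv_lhs => rw [show n = s + (n - s) by omega]
  exact poch_add a s (n - s)

lemma poch_neg_choose (P : ℕ) (t : ℕ) :
    poch (-(P:ℂ)) t = (-1)^t * (t.factorial : ℂ) * (P.choose t : ℂ) := by
  rw [poch_neg_nat, Nat.descFactorial_eq_factorial_mul_choose]
  push_cast
  ring

lemma poch_neg_symm (P n j : ℕ) :
    (P.choose j : ℂ) * poch (-(n:ℂ)) j = (n.choose j : ℂ) * poch (-(P:ℂ)) j := by
  rw [poch_neg_choose, poch_neg_choose]
  ring

lemma poch_V (n : ℕ) (b C : ℂ) :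
    ∑ k ∈ range (n+1), (-1)^k * (n.choose k : ℂ) * poch b k * poch (C + k) (n - k)
      = poch (C - b) n := by
  have e1 : ∀ k ∈ range (n+1), (-1:ℂ)^k * (n.choose k : ℂ) * poch b k * poch (C + k) (n - k)
      = (-1)^n * ((n.choose k : ℂ) * poch b k * poch (1 - C - n) (n - k)) := by
    intro k hk
    rw [mem_range] at hk
    have h1 : poch (C + k) (n - k) = (-1)^(n-k) * poch (1 - C - n) (n - k) := by
      rw [poch_reflect (C + k) (n - k)]
      congr 2
      rw [Nat.cast_sub (by omega : k ≤ n)]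
      ring
    rw [h1]
    rw [show (-1:ℂ)^n = (-1)^k * (-1)^(n-k) by
      rw [← pow_add]; congr 1; omega]
    ring
  rw [Finset.sum_congr rfl e1, ← Finset.mul_sum, poch_conv n b (1 - C - n)]
  rw [poch_reflect (C - b) n]
  congr 2
  ring

lemma poch_W (M P : ℕ) (X : ℂ) :
    ∑ t ∈ range (M+1), (P.choose t : ℂ) * (M.choose t : ℂ) * (t.factorial : ℂ) * poch (X + t) (M - t)
      = poch (X + P) M := by
  have e1 : ∀ t ∈ range (M+1), (P.choose t : ℂ) * (M.choose t : ℂ) * (t.factorial : ℂ) * poch (X + t) (M - t)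
      = (-1)^M * ((M.choose t : ℂ) * poch (-(P:ℂ)) t * poch (1 - X - M) (M - t)) := by
    intro t ht
    rw [mem_range] at ht
    have h1 : poch (X + t) (M - t) = (-1)^(M-t) * poch (1 - X - M) (M - t) := by
      rw [poch_reflect (X + t) (M - t)]
      congr 2
      rw [Nat.cast_sub (by omega : t ≤ M)]
      ring
    rw [h1, poch_neg_choose]
    rw [show (-1:ℂ)^M = (-1)^t * (-1)^(M-t) by
      rw [← pow_add]; congr 1; omega]
    ring_nf
    rw [show ((-1:ℂ))^(t*2) = 1 by rw [mul_comm, pow_mul]; norm_num]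
    ring
  rw [Finset.sum_congr rfl e1, ← Finset.mul_sum, poch_conv M (-(P:ℂ)) (1 - X - M)]
  rw [poch_reflect (X + P) M]
  congr 2
  ring

lemma sum_triangle (f : ℕ → ℕ → ℂ) : ∀ N : ℕ,
    ∑ s ∈ range N, ∑ j ∈ range (s+1), f s j
      = ∑ j ∈ range N, ∑ t ∈ range (N - j), f (j + t) j
  | 0 => by simp
  | (N+1) => by
    have h1 : ∑ j ∈ range N, ∑ t ∈ range (N + 1 - j), f (j + t) j
        = ∑ j ∈ range N, (∑ t ∈ range (N - j), f (j + t) j + f N j) := by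
      refine Finset.sum_congr rfl fun j hj => ?_
      rw [mem_range] at hj
      rw [show N + 1 - j = (N - j) + 1 by omega, Finset.sum_range_succ]
      congr 2
      omega
    have h2 : ∑ t ∈ range (N + 1 - N), f (N + t) N = f N N := by
      rw [show N + 1 - N = 1 by omega]
      simp
    have hR : ∑ j ∈ range (N+1), ∑ t ∈ range (N+1-j), f (j+t) j
        = (∑ j ∈ range N, ∑ t ∈ range (N-j), f (j+t) j) + ∑ j ∈ range (N+1), f N j := by
      rw [Finset.sum_range_succ, h1, Finset.sum_add_distrib, h2, Finset.sum_range_succ]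
      ring
    rw [Finset.sum_range_succ, sum_triangle f N, hR]

lemma fact_ne (k : ℕ) : ((k.factorial : ℂ)) ≠ 0 :=
  Nat.cast_ne_zero.mpr (Nat.factorial_ne_zero k)

lemma choose_mul_choose (n j t : ℕ) (h : j + t ≤ n) :
    ((n.choose (j+t) : ℂ)) * (((j+t).choose j : ℂ)) = (n.choose j : ℂ) * ((n-j).choose t : ℂ) := by
  rw [Nat.cast_choose ℂ h, Nat.cast_choose ℂ (by omega : j ≤ j + t),
    Nat.cast_choose ℂ (by omega : j ≤ n), Nat.cast_choose ℂ (by omega : t ≤ n - j)]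
  rw [show n - (j+t) = n - j - t by omega, show j + t - j = t by omega]
  rw [div_mul_div_comm, div_mul_div_comm]
  rw [div_eq_div_iff
    (mul_ne_zero (mul_ne_zero (fact_ne _) (fact_ne _)) (mul_ne_zero (fact_ne _) (fact_ne _)))
    (mul_ne_zero (mul_ne_zero (fact_ne _) (fact_ne _)) (mul_ne_zero (fact_ne _) (fact_ne _)))]
  ring

lemma choose3 (n r i j : ℕ) (hij : i ≤ j) (hjr : j ≤ r) (hrn : r ≤ n) :
    (n.choose j : ℂ) * ((j.choose i : ℂ) * ((n-j).choose (r-j) : ℂ))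
      = (n.choose r : ℂ) * ((r.choose i : ℂ) * ((r-i).choose (j-i) : ℂ)) := by
  rw [Nat.cast_choose ℂ (by omega : j ≤ n), Nat.cast_choose ℂ hij,
    Nat.cast_choose ℂ (by omega : r - j ≤ n - j), Nat.cast_choose ℂ hrn,
    Nat.cast_choose ℂ (by omega : i ≤ r), Nat.cast_choose ℂ (by omega : j - i ≤ r - i)]
  rw [show n - j - (r - j) = n - r by omega, show r - i - (j - i) = r - j by omega]
  rw [div_mul_div_comm, div_mul_div_comm, div_mul_div_comm, div_mul_div_comm]
  rw [div_eq_div_iff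
    (mul_ne_zero (mul_ne_zero (fact_ne _) (fact_ne _))
      (mul_ne_zero (mul_ne_zero (fact_ne _) (fact_ne _)) (mul_ne_zero (fact_ne _) (fact_ne _))))
    (mul_ne_zero (mul_ne_zero (fact_ne _) (fact_ne _))
      (mul_ne_zero (mul_ne_zero (fact_ne _) (fact_ne _)) (mul_ne_zero (fact_ne _) (fact_ne _))))]
  ring

lemma neg_one_sq_pow (j : ℕ) : ((-1:ℂ))^j * (-1)^j = 1 := by
  rw [← pow_add, ← two_mul, pow_mul]
  norm_num

lemma step1 (n : ℕ) (a b c e : ℂ) :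
    ∑ s ∈ range (n+1), (-1)^s * (n.choose s:ℂ) * poch a s * poch b s * poch (c+s) (n-s) * poch (e+s) (n-s)
      = ∑ j ∈ range (n+1), (n.choose j:ℂ) * poch a j * poch (e-b) j * poch (c-a) (n-j) * poch (e+j) (n-j) := by
  have L1 : ∑ s ∈ range (n+1), (-1:ℂ)^s * (n.choose s:ℂ) * poch a s * poch b s * poch (c+s) (n-s) * poch (e+s) (n-s)
      = ∑ s ∈ range (n+1), ∑ j ∈ range (s+1),
          (-1:ℂ)^s * (n.choose s:ℂ) * poch a s * ((-1)^j * (s.choose j : ℂ) * poch (e-b) j * poch (e+j) (s-j))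
            * poch (c+s) (n-s) * poch (e+s) (n-s) := by
    refine Finset.sum_congr rfl fun s _ => ?_
    have expand : poch b s = ∑ j ∈ range (s+1), (-1:ℂ)^j * (s.choose j : ℂ) * poch (e-b) j * poch (e+j) (s-j) := by
      rw [poch_V s (e-b) e, show e - (e-b) = b by ring]
    rw [expand, Finset.mul_sum, Finset.sum_mul, Finset.sum_mul]
  rw [L1, sum_triangle (fun s j => (-1:ℂ)^s * (n.choose s:ℂ) * poch a s
      * ((-1)^j * (s.choose j : ℂ) * poch (e-b) j * poch (e+j) (s-j))
      * poch (c+s) (n-s) * poch (e+s) (n-s)) (n+1)]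
  refine Finset.sum_congr rfl fun j hj => ?_
  rw [mem_range] at hj
  rw [show n + 1 - j = (n - j) + 1 by omega]
  have term : ∀ t ∈ range ((n-j)+1),
      (-1:ℂ)^(j+t) * (n.choose (j+t):ℂ) * poch a (j+t)
          * ((-1)^j * (((j+t).choose j) : ℂ) * poch (e-b) j * poch (e+j) ((j+t)-j))
          * poch (c+(j+t:ℕ)) (n-(j+t)) * poch (e+(j+t:ℕ)) (n-(j+t))
      = ((n.choose j:ℂ) * poch a j * poch (e-b) j * poch (e+j) (n-j))
          * ((-1)^t * (((n-j).choose t) : ℂ) * poch (a+j) t * poch ((c+j)+t) ((n-j)-t)) := by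
    intro t ht
    rw [mem_range] at ht
    have h1 : j + t ≤ n := by omega
    rw [show j + t - j = t by omega, show n - (j + t) = (n - j) - t by omega,
      poch_add a j t, poch_split_of_le (e+(j:ℂ)) (show t ≤ n - j by omega)]
    have hc1 : (c+((j+t:ℕ):ℂ)) = (c+j)+t := by push_cast; ring
    have hc2 : (e+((j+t:ℕ):ℂ)) = (e+j)+t := by push_cast; ring
    rw [hc1, hc2]
    have h6 : (-1:ℂ)^(j+t) * (-1)^j = (-1)^t := by
      rw [pow_add, show (-1:ℂ)^j * (-1)^t * (-1)^j = ((-1)^j*(-1)^j) * (-1)^t by ring,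
        neg_one_sq_pow]
      ring
    have h7 := choose_mul_choose n j t h1
    set R := poch a j * poch (a+(j:ℂ)) t * poch (e-b) j * poch (e+(j:ℂ)) t
        * poch ((c+(j:ℂ))+t) ((n-j)-t) * poch ((e+(j:ℂ))+t) ((n-j)-t) with hR
    linear_combination ((n.choose (j+t):ℂ) * (((j+t).choose j):ℂ) * R) * h6
      + ((-1:ℂ)^t * R) * h7
  rw [Finset.sum_congr rfl term, ← Finset.mul_sum, poch_V (n-j) (a+j) (c+j),
    show (c+(j:ℂ))-(a+(j:ℂ)) = c - a by ring]
  ring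

lemma poch_neg_zero (P j : ℕ) (h : P < j) : poch (-(P:ℂ)) j = 0 := by
  rw [poch_neg_nat, Nat.descFactorial_eq_zero_iff_lt.2 h]
  simp

lemma choose_mul_choose' (p j t : ℕ) :
    ((p.choose (j+t) : ℂ)) * (((j+t).choose j : ℂ)) = (p.choose j : ℂ) * ((p-j).choose t : ℂ) := by
  rcases le_or_gt (j+t) p with h | h
  · exact choose_mul_choose p j t h
  · rcases le_or_gt j p with h2 | h2
    · rw [Nat.choose_eq_zero_of_lt h, Nat.choose_eq_zero_of_lt (by omega : p - j < t)]
      simp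
    · rw [Nat.choose_eq_zero_of_lt (by omega : p < j + t), Nat.choose_eq_zero_of_lt h2]
      simp

lemma step2 (n p : ℕ) (a w x : ℂ) :
    ∑ k ∈ range (n+1), (-1)^k * (p.choose k:ℂ) * poch (-(n:ℂ)) k * poch (w-a) k * poch (x+k) (n-k) * poch (w+k) (n-k)
      = ∑ j ∈ range (n+1), (n.choose j:ℂ) * poch (-(p:ℂ)) j * poch a j * poch (x+p) (n-j) * poch (w+j) (n-j) := by
  have L1 : ∑ k ∈ range (n+1), (-1:ℂ)^k * (p.choose k:ℂ) * poch (-(n:ℂ)) k * poch (w-a) k * poch (x+k) (n-k) * poch (w+k) (n-k)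
      = ∑ k ∈ range (n+1), ∑ j ∈ range (k+1),
          (-1:ℂ)^k * (p.choose k:ℂ) * poch (-(n:ℂ)) k * ((-1)^j * (k.choose j : ℂ) * poch a j * poch (w+j) (k-j))
            * poch (x+k) (n-k) * poch (w+k) (n-k) := by
    refine Finset.sum_congr rfl fun k _ => ?_
    rw [← poch_V k a w, Finset.mul_sum, Finset.sum_mul, Finset.sum_mul]
  rw [L1, sum_triangle (fun k j => (-1:ℂ)^k * (p.choose k:ℂ) * poch (-(n:ℂ)) k
      * ((-1)^j * (k.choose j : ℂ) * poch a j * poch (w+j) (k-j))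
      * poch (x+k) (n-k) * poch (w+k) (n-k)) (n+1)]
  refine Finset.sum_congr rfl fun j hj => ?_
  rw [mem_range] at hj
  rw [show n + 1 - j = (n - j) + 1 by omega]
  have term : ∀ t ∈ range ((n-j)+1),
      (-1:ℂ)^(j+t) * (p.choose (j+t):ℂ) * poch (-(n:ℂ)) (j+t)
          * ((-1)^j * (((j+t).choose j) : ℂ) * poch a j * poch (w+j) ((j+t)-j))
          * poch (x+(j+t:ℕ)) (n-(j+t)) * poch (w+(j+t:ℕ)) (n-(j+t))
      = ((p.choose j:ℂ) * poch (-(n:ℂ)) j * poch a j * poch (w+j) (n-j))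
          * ((((p-j).choose t) : ℂ) * (((n-j).choose t) : ℂ) * (t.factorial : ℂ) * poch ((x+j)+t) ((n-j)-t)) := by
    intro t ht
    rw [mem_range] at ht
    rw [show j + t - j = t by omega, show n - (j + t) = (n - j) - t by omega,
      poch_add (-(n:ℂ)) j t, poch_split_of_le (w+(j:ℂ)) (show t ≤ n - j by omega)]
    have hc1 : (x+((j+t:ℕ):ℂ)) = (x+j)+t := by push_cast; ring
    have hc2 : (w+((j+t:ℕ):ℂ)) = (w+j)+t := by push_cast; ring
    have hc3 : (-(n:ℂ)+j) = -((n-j:ℕ):ℂ) := by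
      rw [Nat.cast_sub (by omega : j ≤ n)]; ring
    rw [hc1, hc2, hc3, poch_neg_choose (n-j) t]
    have h6 : (-1:ℂ)^(j+t) * ((-1)^j * (-1)^t) = 1 := by
      rw [pow_add, show (-1:ℂ)^j * (-1)^t * ((-1)^j * (-1)^t) = ((-1)^j*(-1)^j) * ((-1)^t*(-1)^t) by ring,
        neg_one_sq_pow, neg_one_sq_pow]
      ring
    have h7 := choose_mul_choose' p j t
    set R := poch (-(n:ℂ)) j * poch a j * poch (w+(j:ℂ)) t * (t.factorial : ℂ) * ((n-j).choose t : ℂ)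
        * poch ((x+(j:ℂ))+t) ((n-j)-t) * poch ((w+(j:ℂ))+t) ((n-j)-t) with hR
    linear_combination ((p.choose (j+t):ℂ) * (((j+t).choose j):ℂ) * R) * h6 + R * h7
  rw [Finset.sum_congr rfl term, ← Finset.mul_sum, poch_W (n-j) (p-j) (x+j)]
  rcases le_or_gt j p with hjp | hjp
  · rw [show (x+(j:ℂ))+((p-j:ℕ):ℂ) = x+p by rw [Nat.cast_sub hjp]; ring]
    linear_combination (poch a j * poch (w+(j:ℂ)) (n-j) * poch (x+p) (n-j)) * (poch_neg_symm p n j)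
  · rw [Nat.choose_eq_zero_of_lt hjp, poch_neg_zero p j hjp]
    simp

lemma starA (n p : ℕ) (u v w : ℂ) :
    ∑ r ∈ range (n+1), ∑ i ∈ range (r+1),
        (n.choose r:ℂ) * (r.choose i:ℂ) * poch (-(p:ℂ)) i * poch u i * poch (i:ℂ) (r-i)
          * poch v (n-i) * poch w (n-r)
      = ∑ j ∈ range (n+1), (n.choose j:ℂ) * poch u j * poch (-(p:ℂ)) j * poch v (n-j) * poch (w+j) (n-j) := by
  rw [sum_triangle (fun r i => (n.choose r:ℂ) * (r.choose i:ℂ) * poch (-(p:ℂ)) i * poch u i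
      * poch (i:ℂ) (r-i) * poch v (n-i) * poch w (n-r)) (n+1)]
  refine Finset.sum_congr rfl fun j hj => ?_
  rw [mem_range] at hj
  rw [show n + 1 - j = (n - j) + 1 by omega]
  have term : ∀ t ∈ range ((n-j)+1),
      (n.choose (j+t):ℂ) * ((j+t).choose j:ℂ) * poch (-(p:ℂ)) j * poch u j
          * poch (j:ℂ) ((j+t)-j) * poch v (n-j) * poch w (n-(j+t))
      = ((n.choose j:ℂ) * poch u j * poch (-(p:ℂ)) j * poch v (n-j))
          * (((n-j).choose t:ℂ) * poch (j:ℂ) t * poch w ((n-j)-t)) := by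
    intro t ht
    rw [mem_range] at ht
    rw [show j + t - j = t by omega, show n - (j + t) = (n - j) - t by omega]
    linear_combination (poch (-(p:ℂ)) j * poch u j * poch (j:ℂ) t * poch v (n-j)
      * poch w ((n-j)-t)) * choose_mul_choose n j t (by omega)
  rw [Finset.sum_congr rfl term, ← Finset.mul_sum, poch_conv (n-j) ((j:ℂ)) w,
    show ((j:ℂ)) + w = w + j by ring]

lemma starB (n p : ℕ) (u v w : ℂ) :
    ∑ r ∈ range (n+1), ∑ i ∈ range (r+1),
        (n.choose r:ℂ) * (r.choose i:ℂ) * poch (-(p:ℂ)) i * poch u i * poch (i:ℂ) (r-i)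
          * poch v (n-i) * poch w (n-r)
      = ∑ j ∈ range (n+1), (n.choose j:ℂ) * poch u j * poch (v+(n:ℂ)-(p:ℂ)-(j:ℂ)) j
          * poch v (n-j) * poch (w-u) (n-j) := by
  -- expand the RHS into a triple sum and regroup
  have L2 : ∑ j ∈ range (n+1), (n.choose j:ℂ) * poch u j * poch (v+(n:ℂ)-(p:ℂ)-(j:ℂ)) j
        * poch v (n-j) * poch (w-u) (n-j)
      = ∑ j ∈ range (n+1), ∑ t ∈ range (n+1-j), ∑ i ∈ range (j+1),
          (n.choose j:ℂ) * (j.choose i:ℂ) * ((n-j).choose ((j+t)-j):ℂ) * poch u j * poch (-(p:ℂ)) i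
            * poch v (n-i) * poch (-u) ((j+t)-j) * poch w (n-(j+t)) := by
    refine Finset.sum_congr rfl fun j hj => ?_
    rw [mem_range] at hj
    have e1 : poch (v+(n:ℂ)-(p:ℂ)-(j:ℂ)) j
        = ∑ i ∈ range (j+1), (j.choose i:ℂ) * poch (-(p:ℂ)) i * poch (v+(n:ℂ)-(j:ℂ)) (j-i) := by
      rw [poch_conv j (-(p:ℂ)) (v+(n:ℂ)-(j:ℂ)), show -(p:ℂ) + (v+(n:ℂ)-(j:ℂ)) = v+(n:ℂ)-(p:ℂ)-(j:ℂ) by ring]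
    have e2 : poch (w-u) (n-j)
        = ∑ t ∈ range ((n-j)+1), ((n-j).choose t:ℂ) * poch (-u) t * poch w ((n-j)-t) := by
      rw [poch_conv (n-j) (-u) w, show -u + w = w - u by ring]
    rw [e1, e2, show n + 1 - j = (n - j) + 1 by omega]
    rw [Finset.mul_sum]
    refine Finset.sum_congr rfl fun t ht => ?_
    rw [mem_range] at ht
    rw [show (n.choose j:ℂ) * poch u j * (∑ i ∈ range (j+1), (j.choose i:ℂ) * poch (-(p:ℂ)) i * poch (v+(n:ℂ)-(j:ℂ)) (j-i))
        * poch v (n-j) * (((n-j).choose t:ℂ) * poch (-u) t * poch w ((n-j)-t))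
      = ∑ i ∈ range (j+1), ((j.choose i:ℂ) * poch (-(p:ℂ)) i * poch (v+(n:ℂ)-(j:ℂ)) (j-i))
          * ((n.choose j:ℂ) * poch u j * poch v (n-j) * (((n-j).choose t:ℂ) * poch (-u) t * poch w ((n-j)-t))) by
        rw [← Finset.sum_mul]; ring]
    refine Finset.sum_congr rfl fun i hi => ?_
    rw [mem_range] at hi
    rw [show n - (j + t) = n - j - t by omega]
    have e3 : poch v (n-j) * poch (v+(n:ℂ)-(j:ℂ)) (j-i) = poch v (n-i) := by
      rw [show v+(n:ℂ)-(j:ℂ) = v + ((n-j:ℕ):ℂ) by rw [Nat.cast_sub (by omega : j ≤ n)]; ring]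
      rw [← poch_add v (n-j) (j-i), show (n-j)+(j-i) = n-i by omega]
    rw [show j + t - j = t by omega]
    linear_combination ((j.choose i:ℂ) * poch (-(p:ℂ)) i * (n.choose j:ℂ) * poch u j
      * ((n-j).choose t:ℂ) * poch (-u) t * poch w ((n-j)-t)) * e3
  rw [L2, ← sum_triangle (fun r j => ∑ i ∈ range (j+1),
      (n.choose j:ℂ) * (j.choose i:ℂ) * ((n-j).choose (r-j):ℂ) * poch u j * poch (-(p:ℂ)) i
        * poch v (n-i) * poch (-u) (r-j) * poch w (n-r)) (n+1)]
  refine Finset.sum_congr rfl fun r hr => ?_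
  rw [mem_range] at hr
  rw [sum_triangle (fun j i => (n.choose j:ℂ) * (j.choose i:ℂ) * ((n-j).choose (r-j):ℂ)
      * poch u j * poch (-(p:ℂ)) i * poch v (n-i) * poch (-u) (r-j) * poch w (n-r)) (r+1)]
  refine Finset.sum_congr rfl fun i hi => ?_
  rw [mem_range] at hi
  rw [show r + 1 - i = (r - i) + 1 by omega]
  have term : ∀ m ∈ range ((r-i)+1),
      (n.choose (i+m):ℂ) * ((i+m).choose i:ℂ) * ((n-(i+m)).choose (r-(i+m)):ℂ)
          * poch u (i+m) * poch (-(p:ℂ)) i * poch v (n-i) * poch (-u) (r-(i+m)) * poch w (n-r)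
      = ((n.choose r:ℂ) * (r.choose i:ℂ) * poch (-(p:ℂ)) i * poch u i * poch v (n-i) * poch w (n-r))
          * (((r-i).choose m:ℂ) * poch (u+i) m * poch (-u) ((r-i)-m)) := by
    intro m hm
    rw [mem_range] at hm
    rw [poch_add u i m, show r - (i+m) = (r-i) - m by omega]
    have h3 := choose3 n r i (i+m) (by omega) (by omega) (by omega)
    rw [show (i+m) - i = m by omega, show r - (i+m) = (r-i) - m by omega] at h3
    linear_combination (poch u i * poch (u+(i:ℂ)) m * poch (-(p:ℂ)) i * poch v (n-i)
      * poch (-u) ((r-i)-m) * poch w (n-r)) * h3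
  rw [Finset.sum_congr rfl term, ← Finset.mul_sum, poch_conv (r-i) (u+(i:ℂ)) (-u),
    show (u+(i:ℂ)) + -u = (i:ℂ) by ring]
  ring

lemma neg_one_split {j n : ℕ} (h : j ≤ n) : ((-1:ℂ))^j * (-1)^(n-j) = (-1)^n := by
  rw [← pow_add]
  congr 1
  omega

lemma clearedT (n p : ℕ) (a b c : ℂ) :
    (∑ s ∈ range (n+1), (-1)^s * (n.choose s:ℂ) * poch a s * poch b s
        * poch (c+s) (n-s) * poch ((1+a+b-c+p-n)+s) (n-s)) * poch (c-a-b-(p:ℂ)) n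
      = poch (1+a+b-c+(p:ℂ)-(n:ℂ)) n
        * ∑ k ∈ range (n+1), (-1)^k * (p.choose k:ℂ) * poch (-(n:ℂ)) k * poch (c-a-b-(p:ℂ)) k
            * poch ((c-a-(p:ℂ))+k) (n-k) * poch ((c-b-(p:ℂ))+k) (n-k) := by
  set e : ℂ := 1+a+b-c+(p:ℂ)-(n:ℂ) with he
  have hL : ∑ s ∈ range (n+1), (-1:ℂ)^s * (n.choose s:ℂ) * poch a s * poch b s
        * poch (c+s) (n-s) * poch (e+s) (n-s)
      = (-1:ℂ)^n * ∑ j ∈ range (n+1), (n.choose j:ℂ) * poch a j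
          * poch ((c-a)+(n:ℂ)-(p:ℂ)-(j:ℂ)) j * poch (c-a) (n-j) * poch ((c-b-(p:ℂ))-a) (n-j) := by
    rw [step1 n a b c e, Finset.mul_sum]
    refine Finset.sum_congr rfl fun j hj => ?_
    rw [mem_range] at hj
    have r1 : poch (e-b) j = (-1)^j * poch ((c-a)+(n:ℂ)-(p:ℂ)-(j:ℂ)) j := by
      rw [poch_reflect (e-b) j]
      congr 2
      rw [he]; ring
    have r2 : poch (e+j) (n-j) = (-1)^(n-j) * poch ((c-b-(p:ℂ))-a) (n-j) := by
      rw [poch_reflect (e+j) (n-j)]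
      congr 2
      rw [Nat.cast_sub (by omega : j ≤ n), he]; ring
    rw [r1, r2]
    rw [show ((n.choose j:ℂ)) * poch a j * ((-1:ℂ)^j * poch ((c-a)+(n:ℂ)-(p:ℂ)-(j:ℂ)) j) * poch (c-a) (n-j)
          * ((-1:ℂ)^(n-j) * poch ((c-b-(p:ℂ))-a) (n-j))
        = ((-1:ℂ)^j * (-1)^(n-j)) * ((n.choose j:ℂ) * poch a j * poch ((c-a)+(n:ℂ)-(p:ℂ)-(j:ℂ)) j
            * poch (c-a) (n-j) * poch ((c-b-(p:ℂ))-a) (n-j)) by ring, neg_one_split (by omega : j ≤ n)]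
  have hstar := (starB n p a (c-a) (c-b-(p:ℂ))).symm.trans (starA n p a (c-a) (c-b-(p:ℂ)))
  have hR : ∑ k ∈ range (n+1), (-1:ℂ)^k * (p.choose k:ℂ) * poch (-(n:ℂ)) k * poch (c-a-b-(p:ℂ)) k
        * poch ((c-a-(p:ℂ))+k) (n-k) * poch ((c-b-(p:ℂ))+k) (n-k)
      = ∑ j ∈ range (n+1), (n.choose j:ℂ) * poch a j * poch (-(p:ℂ)) j * poch (c-a) (n-j)
          * poch ((c-b-(p:ℂ))+j) (n-j) := by
    have h2 := step2 n p a (c-b-(p:ℂ)) (c-a-(p:ℂ))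
    rw [show (c-b-(p:ℂ)) - a = c-a-b-(p:ℂ) by ring, show (c-a-(p:ℂ)) + (p:ℂ) = c - a by ring] at h2
    rw [h2]
    refine Finset.sum_congr rfl fun j _ => ?_
    ring
  rw [hL, hstar, ← hR]
  have hrev : poch (c-a-b-(p:ℂ)) n = (-1)^n * poch e n := by
    rw [poch_reflect (c-a-b-(p:ℂ)) n]
    congr 2
    rw [he]; ring
  rw [hrev]
  have key : ∀ S E : ℂ, ((-1:ℂ)^n * S) * ((-1)^n * E) = E * S := by
    intro S E
    rw [show ((-1:ℂ)^n * S) * ((-1)^n * E) = ((-1)^n*(-1)^n)*(E*S) by ring, neg_one_sq_pow, one_mul]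
  exact key _ _

/-- **Contiguous Saalschütz formula.** -/
theorem contiguous_saalschutz
    (n p : ℕ) (a b c : ℂ)
    (hc : ∀ s, 1 ≤ s → s ≤ n → poch c s ≠ 0)
    (hd : ∀ s, 1 ≤ s → s ≤ n → poch ((p : ℂ) - n - (c - a - b - 1)) s ≠ 0)
    (hca : ∀ k, 1 ≤ k → k ≤ min p n → poch (c - a - p) k ≠ 0)
    (hcb : ∀ k, 1 ≤ k → k ≤ min p n → poch (c - b - p) k ≠ 0)
    (hcab : poch (c - a - b - p) n ≠ 0) :
    ∑ s ∈ Finset.range (n + 1),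
      poch (-(n : ℂ)) s * poch a s * poch b s /
        (poch c s * poch ((p : ℂ) - n - (c - a - b - 1)) s * (Nat.factorial s : ℂ))
      = poch (c - a - p) n * poch (c - b - p) n / (poch c n * poch (c - a - b - p) n) *
          ∑ k ∈ Finset.range (min p n + 1),
            poch (-(p : ℂ)) k * poch (-(n : ℂ)) k * poch (c - a - b - p) k /
              (poch (c - a - p) k * poch (c - b - p) k * (Nat.factorial k : ℂ)) := by
  have he : (p : ℂ) - n - (c - a - b - 1) = 1+a+b-c+(p:ℂ)-(n:ℂ) := by ring
  rw [he]
  have hd' : ∀ s, s ≤ n → poch (1+a+b-c+(p:ℂ)-(n:ℂ)) s ≠ 0 := by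
    intro s hs
    rcases Nat.eq_zero_or_pos s with h0 | h1
    · subst h0; rw [poch_zero]; exact one_ne_zero
    · have := hd s h1 hs; rwa [he] at this
  have hc' : ∀ s, s ≤ n → poch c s ≠ 0 := by
    intro s hs
    rcases Nat.eq_zero_or_pos s with h0 | h1
    · subst h0; rw [poch_zero]; exact one_ne_zero
    · exact hc s h1 hs
  have hca' : ∀ k, k ≤ min p n → poch (c - a - (p:ℂ)) k ≠ 0 := by
    intro k hk
    rcases Nat.eq_zero_or_pos k with h0 | h1
    · subst h0; rw [poch_zero]; exact one_ne_zero
    · exact hca k h1 hk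
  have hcb' : ∀ k, k ≤ min p n → poch (c - b - (p:ℂ)) k ≠ 0 := by
    intro k hk
    rcases Nat.eq_zero_or_pos k with h0 | h1
    · subst h0; rw [poch_zero]; exact one_ne_zero
    · exact hcb k h1 hk
  have hPc : poch c n ≠ 0 := hc' n le_rfl
  have hPe : poch (1+a+b-c+(p:ℂ)-(n:ℂ)) n ≠ 0 := hd' n le_rfl
  have hMne : poch c n * poch (1+a+b-c+(p:ℂ)-(n:ℂ)) n * poch (c - a - b - (p:ℂ)) n ≠ 0 :=
    mul_ne_zero (mul_ne_zero hPc hPe) hcab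
  apply mul_right_cancel₀ hMne
  have h1 : (∑ s ∈ Finset.range (n + 1),
        poch (-(n : ℂ)) s * poch a s * poch b s /
          (poch c s * poch (1+a+b-c+(p:ℂ)-(n:ℂ)) s * (Nat.factorial s : ℂ)))
        * (poch c n * poch (1+a+b-c+(p:ℂ)-(n:ℂ)) n * poch (c - a - b - (p:ℂ)) n)
      = (∑ s ∈ range (n+1), (-1)^s * (n.choose s:ℂ) * poch a s * poch b s
          * poch (c+s) (n-s) * poch ((1+a+b-c+(p:ℂ)-(n:ℂ))+s) (n-s)) * poch (c-a-b-(p:ℂ)) n := by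
    rw [Finset.sum_mul, Finset.sum_mul]
    refine Finset.sum_congr rfl fun s hs => ?_
    rw [mem_range] at hs
    have hs' : s ≤ n := by omega
    rw [poch_split_of_le c hs', poch_split_of_le (1+a+b-c+(p:ℂ)-(n:ℂ)) hs', poch_neg_choose n s]
    rw [div_mul_eq_mul_div, div_eq_iff
      (mul_ne_zero (mul_ne_zero (hc' s hs') (hd' s hs')) (fact_ne s))]
    ring
  have h2 : (poch (c - a - (p:ℂ)) n * poch (c - b - (p:ℂ)) n / (poch c n * poch (c - a - b - (p:ℂ)) n) *
        ∑ k ∈ Finset.range (min p n + 1),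
          poch (-(p : ℂ)) k * poch (-(n : ℂ)) k * poch (c - a - b - (p:ℂ)) k /
            (poch (c - a - (p:ℂ)) k * poch (c - b - (p:ℂ)) k * (Nat.factorial k : ℂ)))
        * (poch c n * poch (1+a+b-c+(p:ℂ)-(n:ℂ)) n * poch (c - a - b - (p:ℂ)) n)
      = poch (1+a+b-c+(p:ℂ)-(n:ℂ)) n
        * ∑ k ∈ range (n+1), (-1)^k * (p.choose k:ℂ) * poch (-(n:ℂ)) k * poch (c-a-b-(p:ℂ)) k
            * poch ((c-a-(p:ℂ))+k) (n-k) * poch ((c-b-(p:ℂ))+k) (n-k) := by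
    have cancel : ∀ S : ℂ, (poch (c - a - (p:ℂ)) n * poch (c - b - (p:ℂ)) n
          / (poch c n * poch (c - a - b - (p:ℂ)) n) * S)
          * (poch c n * poch (1+a+b-c+(p:ℂ)-(n:ℂ)) n * poch (c - a - b - (p:ℂ)) n)
        = poch (1+a+b-c+(p:ℂ)-(n:ℂ)) n * (poch (c - a - (p:ℂ)) n * poch (c - b - (p:ℂ)) n * S) := by
      intro S
      field_simp
    rw [cancel, Finset.mul_sum]
    congr 1
    have step : ∀ k ∈ Finset.range (min p n + 1),
        poch (c - a - (p:ℂ)) n * poch (c - b - (p:ℂ)) n *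
          (poch (-(p : ℂ)) k * poch (-(n : ℂ)) k * poch (c - a - b - (p:ℂ)) k /
            (poch (c - a - (p:ℂ)) k * poch (c - b - (p:ℂ)) k * (Nat.factorial k : ℂ)))
        = (-1)^k * (p.choose k:ℂ) * poch (-(n:ℂ)) k * poch (c-a-b-(p:ℂ)) k
            * poch ((c-a-(p:ℂ))+k) (n-k) * poch ((c-b-(p:ℂ))+k) (n-k) := by
      intro k hk
      rw [mem_range] at hk
      have hk' : k ≤ min p n := by omega
      have hkn : k ≤ n := le_trans hk' (min_le_right p n)
      rw [poch_split_of_le (c - a - (p:ℂ)) hkn, poch_split_of_le (c - b - (p:ℂ)) hkn,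
        poch_neg_choose p k, ← mul_div_assoc, div_eq_iff
        (mul_ne_zero (mul_ne_zero (hca' k hk') (hcb' k hk')) (fact_ne k))]
      ring
    rw [Finset.sum_congr rfl step]
    rcases le_or_gt n p with hnp | hpn
    · rw [min_eq_right hnp]
    · rw [min_eq_left hpn.le]
      apply Finset.sum_subset
      · intro x hx
        rw [mem_range] at *
        omega
      · intro k hk hnk
        rw [mem_range] at hk hnk
        rw [Nat.choose_eq_zero_of_lt (by omega : p < k)]
        simp
  rw [h1, h2]
  exact clearedT n p a b c
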